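/- Fix an integer q ≥ 1, let a_m denote the number of unbordered words of length m over a q-letter alphabet, and let α = ∑_{m≥0} a_m X^m ∈ ℤ[[X]]. Then (1 − qX)·α(X) = 2 − α(X²), where α(X²) denotes the power series obtained from α by substituting X² for X. -/

import Mathlib

/-- `B` is a border of the word `W`: a nonempty proper suffix of `W`
(proper meaning of length strictly less than `|W|`) that is also a prefix of `W`. -/
def IsBorder {α : Type*} (B W : List α) : Prop :=
  B ≠ [] ∧ B.length < W.length ∧ B <:+ W ∧ B <+: W

/-- A word is unbordered if it has no border. -/
def Unbordered {α : Type*} (W : List α) : Prop :=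
  ∀ B, ¬ IsBorder B W

/-- The number of unbordered words of length `m` over a `q`-letter alphabet. -/
noncomputable def countUnbordered (q m : ℕ) : ℕ :=
  Nat.card {w : List (Fin q) // w.length = m ∧ Unbordered w}

/-- Substituting `X²` for `X` in a formal power series over `ℤ`:
the coefficient of `X^m` in `φ(X²)` is the coefficient of `X^(m/2)` in `φ` when `m` is
even, and `0` otherwise. -/
noncomputable def substXsq (φ : PowerSeries ℤ) : PowerSeries ℤ :=
  PowerSeries.mk fun m => if 2 ∣ m then PowerSeries.coeff (m / 2) φ else 0

namespace UB
open List
variable {α : Type*}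

lemma unbordered_nil : Unbordered ([] : List α) := by
  rintro B ⟨hB, hlt, _, _⟩; simp at hlt

lemma exists_short_border {W : List α} :
    ∀ n (B : List α), B.length = n → IsBorder B W →
      ∃ B', IsBorder B' W ∧ 2 * B'.length ≤ W.length := by
  intro n
  induction n using Nat.strong_induction_on with
  | _ n ih =>
    rintro B rfl hB
    by_cases hle : 2 * B.length ≤ W.length
    · exact ⟨B, hB, hle⟩
    · obtain ⟨hne, hlt, hsuf, hpre⟩ := hB
      push_neg at hle
      set b := B.length with hb
      set m := W.length with hm
      have hBt : B = W.take b := by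
        rw [List.prefix_iff_eq_take] at hpre; exact hpre
      have hBd : B = W.drop (m - b) := by
        rw [List.suffix_iff_eq_drop] at hsuf; exact hsuf
      have key : B.take (2*b - m) = B.drop (m - b) := by
        conv_lhs => rw [hBd]
        conv_rhs => rw [hBt]
        rw [List.drop_take]
        congr 1
        omega
      set γ := B.take (2*b - m) with hγ
      have hγlen : γ.length = 2*b - m := by
        simp [hγ]; omega
      have hγlt : γ.length < b := by omega
      have hγborder : IsBorder γ W := by
        refine ⟨?_, ?_, ?_, ?_⟩
        · apply List.ne_nil_of_length_pos; omega
        · omega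
        · rw [key]; exact (List.drop_suffix _ _).trans hsuf
        · exact (List.take_prefix _ _).trans hpre
      exact ih γ.length hγlt γ rfl hγborder

lemma exists_short_border' {W : List α} (h : ¬ Unbordered W) :
    ∃ B, IsBorder B W ∧ 2 * B.length ≤ W.length := by
  rw [Unbordered] at h; push_neg at h
  obtain ⟨B, hB⟩ := h
  exact exists_short_border B.length B rfl hB

lemma prefix_iff_of_take_eq {l₁ l₂ β : List α} {i : ℕ}
    (h : l₁.take i = l₂.take i) (hβ : β.length ≤ i) : β <+: l₁ ↔ β <+: l₂ := by
  rw [List.prefix_iff_eq_take, List.prefix_iff_eq_take]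
  have : l₁.take β.length = l₂.take β.length := by
    have := congrArg (List.take β.length) h
    rwa [List.take_take, List.take_take, min_eq_left hβ] at this
  rw [this]

lemma suffix_iff_of_take_eq {l₁ l₂ β : List α} {i : ℕ}
    (h : l₁.reverse.take i = l₂.reverse.take i) (hβ : β.length ≤ i) :
    β <:+ l₁ ↔ β <:+ l₂ := by
  rw [← List.reverse_prefix, ← List.reverse_prefix]
  exact prefix_iff_of_take_eq h (by simpa using hβ)


def ins (i : ℕ) (c : α) (w : List α) : List α := w.take i ++ c :: w.drop i

lemma ins_length {i : ℕ} {w : List α} (h : i ≤ w.length) (c : α) :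
    (ins i c w).length = w.length + 1 := by
  simp [ins]; omega

lemma ins_take {i : ℕ} {w : List α} (h : i ≤ w.length) (c : α) :
    (ins i c w).take i = w.take i := by
  rw [ins, List.take_append_of_le_length (by simp; omega), List.take_take, min_self]

lemma ins_drop {i : ℕ} {w : List α} (h : i ≤ w.length) (c : α) :
    (ins i c w).drop (i+1) = w.drop i := by
  rw [ins, show i + 1 = (w.take i).length + 1 by simp; omega, List.drop_append]
  simp

lemma ins_getElem {i : ℕ} {w : List α} (h : i ≤ w.length) (c : α) :
    (ins i c w)[i]'(by rw [ins_length h]; omega) = c := by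
  simp only [ins]
  rw [List.getElem_append_right (by simp)]
  have h0 : i ⊓ w.length = i := inf_eq_left.mpr h
  simp [h0]

lemma ins_reverse {i : ℕ} {w : List α} (h : i ≤ w.length) (c : α) :
    (ins i c w).reverse = ins (w.length - i) c w.reverse := by
  simp only [ins, List.reverse_append, List.reverse_cons]
  rw [List.reverse_drop, List.reverse_take]
  simp [show w.length - (w.length - i) = i by omega]

lemma ins_prefix_iff {i : ℕ} {w β : List α} (h : i ≤ w.length) (c : α)
    (hβ : β.length ≤ i) : β <+: ins i c w ↔ β <+: w := by
  exact prefix_iff_of_take_eq (ins_take h c) hβ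

lemma ins_suffix_iff {i : ℕ} {w β : List α} (h : i ≤ w.length) (c : α)
    (hβ : β.length ≤ w.length - i) : β <:+ ins i c w ↔ β <:+ w := by
  refine suffix_iff_of_take_eq ?_ hβ
  rw [ins_reverse h]
  exact ins_take (by simp) c

lemma ins_border_iff {i : ℕ} {w β : List α} (h : i ≤ w.length) (c : α)
    (hβ₁ : β.length ≤ i) (hβ₂ : β.length ≤ w.length - i) (hβ₃ : β ≠ []) :
    IsBorder β (ins i c w) ↔ IsBorder β w := by
  have hpos : 0 < β.length := List.length_pos_iff.mpr hβ₃
  constructor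
  · rintro ⟨-, -, hs, hp⟩
    refine ⟨hβ₃, by omega, (ins_suffix_iff h c hβ₂).mp hs, (ins_prefix_iff h c hβ₁).mp hp⟩
  · rintro ⟨-, -, hs, hp⟩
    refine ⟨hβ₃, by rw [ins_length h]; exact Nat.lt_succ_of_le (hβ₁.trans h),
      (ins_suffix_iff h c hβ₂).mpr hs, (ins_prefix_iff h c hβ₁).mpr hp⟩

/-- the middle-insertion identity: odd case -/
lemma unbordered_ins_iff {k : ℕ} {w : List α} (hw : w.length = 2*k) (c : α) :
    Unbordered (ins k c w) ↔ Unbordered w := by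
  have hk : k ≤ w.length := by omega
  constructor
  · intro hW
    by_contra hw'
    obtain ⟨β, hβ, hβle⟩ := exists_short_border' hw'
    have hlen : 0 < β.length := List.length_pos_iff.mpr hβ.1
    exact hW β ((ins_border_iff hk c (by omega) (by omega) hβ.1).mpr hβ)
  · intro hw'
    by_contra hW
    obtain ⟨β, hβ, hβle⟩ := exists_short_border' hW
    have hlen : 0 < β.length := List.length_pos_iff.mpr hβ.1
    rw [ins_length hk] at hβle
    exact hw' β ((ins_border_iff hk c (by omega) (by omega) hβ.1).mp hβ)

/-- even case characterization of bordered insertions into unbordered odd words -/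
lemma even_bordered_iff {k : ℕ} {w : List α} (hw : w.length = 2*k+1)
    (hwu : Unbordered w) (c : α) :
    ¬ Unbordered (ins (k+1) c w) ↔ w.take (k+1) = c :: w.drop (k+1) := by
  have hk : k + 1 ≤ w.length := by omega
  constructor
  · intro hW
    obtain ⟨β, hβ, hβle⟩ := exists_short_border' hW
    have hlen : 0 < β.length := List.length_pos_iff.mpr hβ.1
    rw [ins_length hk] at hβle
    have hcase : β.length ≤ k ∨ β.length = k + 1 := by omega
    rcases hcase with hsm | heq
    · exact absurd ((ins_border_iff hk c (by omega) (by omega) hβ.1).mp hβ) (hwu β)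
    · obtain ⟨-, -, hs, hp⟩ := hβ
      have h1 : β = (ins (k+1) c w).take (k+1) := by
        rw [List.prefix_iff_eq_take, heq] at hp; exact hp
      have h2 : β = (ins (k+1) c w).drop (k+1) := by
        rw [List.suffix_iff_eq_drop] at hs
        rwa [ins_length hk, hw, heq, show 2*k+1+1 - (k+1) = k+1 by omega] at hs
      rw [ins_take hk] at h1
      rw [ins, List.drop_left' (by simp; omega)] at h2
      rw [← h1, ← h2]
  · intro heq
    intro hW
    refine hW (w.take (k+1)) ⟨?_, ?_, ?_, ?_⟩
    · apply List.ne_nil_of_length_pos; simp; omega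
    · rw [ins_length hk]; simp only [List.length_take]; omega
    · rw [heq]
      exact ⟨w.take (k+1), rfl⟩
    · rw [← ins_take hk c]; exact List.take_prefix _ _
def del (i : ℕ) (W : List α) : List α := W.take i ++ W.drop (i+1)

lemma del_length {i : ℕ} {W : List α} (h : i < W.length) :
    (del i W).length = W.length - 1 := by simp [del]; omega

lemma ins_del {i : ℕ} {W : List α} (h : i < W.length) :
    ins i (W[i]) (del i W) = W := by
  have ht : (del i W).take i = W.take i := List.take_left' (by simp; omega)
  have hd : (del i W).drop i = W.drop (i+1) := List.drop_left' (by simp; omega)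
  rw [ins, ht, hd, ← List.drop_eq_getElem_cons h, List.take_append_drop]

lemma del_ins {i : ℕ} {w : List α} (h : i ≤ w.length) (c : α) :
    del i (ins i c w) = w := by
  rw [del, ins_take h, ins_drop h, List.take_append_drop]

lemma unbordered_append_tail {k : ℕ} {u : List α} (hu : u.length = k+1) :
    Unbordered (u ++ u.tail) ↔ Unbordered u := by
  have htl : u.tail.length = k := by simp [hu]
  have hwl : (u ++ u.tail).length = 2*k+1 := by simp [hu, htl]; omega
  have hpre : ∀ β : List α, β.length ≤ k + 1 → (β <+: u ++ u.tail ↔ β <+: u) := by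
    intro β hβ
    exact prefix_iff_of_take_eq (List.take_append_of_le_length (by omega)) hβ
  have hsuf : ∀ β : List α, β.length ≤ k → (β <:+ u ++ u.tail ↔ β <:+ u) := by
    intro β hβ
    refine suffix_iff_of_take_eq (i := k) ?_ hβ
    rw [List.reverse_append]
    rw [List.take_append_of_le_length (by simp [htl])]
    have : u.tail.reverse = u.reverse.take k := by
      rw [← List.drop_one, List.reverse_drop, hu]
      simp
    rw [this, List.take_take, min_self]
  constructor
  · intro hW
    by_contra hu'
    obtain ⟨β, hβ, hβle⟩ := exists_short_border' hu'
    obtain ⟨hne, hlt, hs, hp⟩ := hβ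
    exact hW β ⟨hne, by omega, (hsuf β (by omega)).mpr hs, (hpre β (by omega)).mpr hp⟩
  · intro hu'
    by_contra hW
    obtain ⟨β, hβ, hβle⟩ := exists_short_border' hW
    obtain ⟨hne, hlt, hs, hp⟩ := hβ
    rw [hwl] at hβle hlt
    exact hu' β ⟨hne, by omega, (hsuf β (by omega)).mp hs, (hpre β (by omega)).mp hp⟩

instance SFin (q m : ℕ) : Finite {w : List (Fin q) // w.length = m ∧ Unbordered w} :=
  Set.Finite.to_subtype ((List.finite_length_eq (Fin q) m).subset (fun _ hw => hw.1))

lemma count_zero (q : ℕ) : countUnbordered q 0 = 1 := by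
  rw [countUnbordered, Nat.card_eq_one_iff_unique]
  constructor
  · constructor
    rintro ⟨w, hw, -⟩ ⟨w', hw', -⟩
    have : w = [] := List.eq_nil_of_length_eq_zero hw
    have : w' = [] := List.eq_nil_of_length_eq_zero hw'
    subst_vars; rfl
  · exact ⟨⟨[], rfl, unbordered_nil⟩⟩

lemma count_odd (q k : ℕ) :
    countUnbordered q (2*k+1) = countUnbordered q (2*k) * q := by
  have key : Nat.card ({w : List (Fin q) // w.length = 2*k ∧ Unbordered w} × Fin q)
      = Nat.card {w : List (Fin q) // w.length = 2*k+1 ∧ Unbordered w} := by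
    apply Nat.card_eq_of_bijective
      (f := fun p => ⟨ins k p.2 p.1.val,
        by rw [ins_length (by rw [p.1.prop.1]; omega)]; rw [p.1.prop.1],
        (unbordered_ins_iff p.1.prop.1 p.2).mpr p.1.prop.2⟩)
    constructor
    · rintro ⟨⟨w, hw, hwu⟩, c⟩ ⟨⟨w', hw', hwu'⟩, c'⟩ h
      rw [Subtype.mk.injEq] at h
      have hk : k ≤ w.length := by omega
      have hk' : k ≤ w'.length := by omega
      have h1 : w.take k = w'.take k := by
        rw [← ins_take hk c, ← ins_take hk' c', h]
      have h2 : w.drop k = w'.drop k := by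
        rw [← ins_drop hk c, ← ins_drop hk' c', h]
      have hww : w = w' := by
        rw [← List.take_append_drop k w, h1, h2, List.take_append_drop]
      have hcc : c = c' := by
        have e1 := ins_getElem hk c
        have e2 := ins_getElem hk' c'
        rw [← e1, ← e2]
        exact List.getElem_of_eq h _
      simp [hww, hcc]
    · rintro ⟨W, hW, hWu⟩
      have hkW : k < W.length := by omega
      set w := del k W with hwdef
      have hwl : w.length = 2*k := by rw [hwdef, del_length hkW]; omega
      have hins : ins k (W[k]) w = W := ins_del hkW
      have hwu : Unbordered w := by
        refine (unbordered_ins_iff hwl (W[k])).mp ?_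
        rw [hins]; exact hWu
      exact ⟨⟨⟨w, hwl, hwu⟩, W[k]⟩, Subtype.ext hins⟩
  rw [countUnbordered, countUnbordered, ← key, Nat.card_prod,
    Nat.card_eq_fintype_card (α := Fin q), Fintype.card_fin]

lemma count_even (q k : ℕ) :
    countUnbordered q (2*k+2) + countUnbordered q (k+1)
      = countUnbordered q (2*k+1) * q := by
  classical
  have key : Nat.card ({w : List (Fin q) // w.length = 2*k+2 ∧ Unbordered w}
        ⊕ {w : List (Fin q) // w.length = k+1 ∧ Unbordered w})
      = Nat.card ({w : List (Fin q) // w.length = 2*k+1 ∧ Unbordered w} × Fin q) := by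
    have hdelW : ∀ (W : List (Fin q)), W.length = 2*k+2 → Unbordered W →
        (del (k+1) W).length = 2*k+1 ∧ Unbordered (del (k+1) W) := by
      intro W hW hWu
      have hkW : k + 1 < W.length := by omega
      have hdl : (del (k+1) W).length = 2*k+1 := by rw [del_length hkW]; omega
      refine ⟨hdl, ?_⟩
      by_contra hbad
      obtain ⟨β, hβ, hβle⟩ := exists_short_border' hbad
      rw [hdl] at hβle
      have hins : ins (k+1) (W[k+1]) (del (k+1) W) = W := ins_del hkW
      refine hWu β ?_
      rw [← hins]
      exact (ins_border_iff (by omega) (W[k+1]) (by omega) (by rw [hdl]; omega) hβ.1).mpr hβ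
    apply Nat.card_eq_of_bijective (f := fun x =>
      Sum.elim
        (fun W => (⟨del (k+1) W.val, (hdelW W.val W.prop.1 W.prop.2).1,
            (hdelW W.val W.prop.1 W.prop.2).2⟩,
          W.val[k+1]'(by rw [W.prop.1]; omega)))
        (fun u => (⟨u.val ++ u.val.tail,
            by have := u.prop.1; simp [this]; omega,
            (unbordered_append_tail u.prop.1).mpr u.prop.2⟩,
          u.val[0]'(by rw [u.prop.1]; omega))) x)
    constructor
    · -- injectivity
      have mixed : ∀ (W : {w : List (Fin q) // w.length = 2*k+2 ∧ Unbordered w})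
          (u : {w : List (Fin q) // w.length = k+1 ∧ Unbordered w}),
          del (k+1) W.val = u.val ++ u.val.tail →
          W.val[k+1]'(by rw [W.prop.1]; omega) = u.val[0]'(by rw [u.prop.1]; omega) →
          False := by
        rintro ⟨W, hW, hWu⟩ ⟨u, hu, huu⟩ hdel hget
        have hkW : k + 1 < W.length := by omega
        have hins : ins (k+1) (W[k+1]) (del (k+1) W) = W := ins_del hkW
        have hu0 : 0 < u.length := by omega
        have hwl : (u ++ u.tail).length = 2*k+1 := by simp [hu]; omega
        have hwu : Unbordered (u ++ u.tail) := (unbordered_append_tail hu).mpr huu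
        have hbord : ¬ Unbordered (ins (k+1) (u[0]) (u ++ u.tail)) := by
          rw [even_bordered_iff hwl hwu]
          rw [List.take_left' (by omega), List.drop_left' (by omega)]
          have h0 := List.drop_eq_getElem_cons (l := u) (i := 0) hu0
          rw [List.drop_zero, List.drop_one] at h0
          exact h0
        apply hbord
        rw [← hget, ← hdel, hins]
        exact hWu
      rintro (⟨W, hW, hWu⟩ | ⟨u, hu, huu⟩) (⟨W', hW', hWu'⟩ | ⟨u', hu', huu'⟩) h <;>
        simp only [Sum.elim_inl, Sum.elim_inr, Prod.mk.injEq, Subtype.mk.injEq] at h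
      · -- inl inl
        obtain ⟨hdel, hget⟩ := h
        have hkW : k + 1 < W.length := by omega
        have hkW' : k + 1 < W'.length := by omega
        have : W = W' := by
          rw [← ins_del (i := k+1) hkW, ← ins_del (i := k+1) hkW', hdel, hget]
        simp [this]
      · exact (mixed ⟨W, hW, hWu⟩ ⟨u', hu', huu'⟩ h.1 h.2).elim
      · exact (mixed ⟨W', hW', hWu'⟩ ⟨u, hu, huu⟩ h.1.symm h.2.symm).elim
      · -- inr inr
        obtain ⟨happ, -⟩ := h
        have : u = u' := by
          have h1 := congrArg (List.take (k+1)) happ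
          rwa [List.take_left' (by omega), List.take_left' (by omega)] at h1
        simp [this]
    · -- surjectivity
      rintro ⟨⟨w, hw, hwu⟩, c⟩
      have hk1 : k + 1 ≤ w.length := by omega
      by_cases hU : Unbordered (ins (k+1) c w)
      · refine ⟨Sum.inl ⟨ins (k+1) c w, by rw [ins_length hk1, hw], hU⟩, ?_⟩
        simp only [Sum.elim_inl]
        refine Prod.ext (Subtype.ext ?_) ?_
        · exact del_ins hk1 c
        · show (ins (k+1) c w)[k+1]'_ = c
          exact ins_getElem hk1 c
      · have heq : w.take (k+1) = c :: w.drop (k+1) :=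
          (even_bordered_iff hw hwu c).mp hU
        set u := w.take (k+1) with hudef
        have hul : u.length = k+1 := by rw [hudef]; simp; omega
        have htail : u.tail = w.drop (k+1) := by rw [heq]; rfl
        have happ : u ++ u.tail = w := by
          rw [htail, hudef, List.take_append_drop]
        have huu : Unbordered u := by
          refine (unbordered_append_tail hul).mp ?_
          rw [happ]; exact hwu
        refine ⟨Sum.inr ⟨u, hul, huu⟩, ?_⟩
        simp only [Sum.elim_inr]
        refine Prod.ext (Subtype.ext happ) ?_
        show u[0]'_ = c
        have : u = c :: w.drop (k+1) := heq
        rw [List.getElem_of_eq this]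
        simp
  rw [countUnbordered, countUnbordered, countUnbordered, ← Nat.card_sum, key,
    Nat.card_prod, Nat.card_eq_fintype_card (α := Fin q), Fintype.card_fin]

end UB

/-- For `q ≥ 1`, the generating function `α = ∑ a_m X^m ∈ ℤ[[X]]` of the numbers `a_m`
of unbordered words of length `m` over a `q`-letter alphabet satisfies
`(1 − qX)·α(X) = 2 − α(X²)`. -/
theorem unbordered_gf_functional_equation (q : ℕ) (hq : 1 ≤ q)
    (α : PowerSeries ℤ)
    (hα : α = PowerSeries.mk fun m => (countUnbordered q m : ℤ)) :
    (1 - (q : PowerSeries ℤ) * PowerSeries.X) * α = 2 - substXsq α := by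
  have a0 := UB.count_zero q
  apply PowerSeries.ext
  intro m
  have hC : (q : PowerSeries ℤ) = PowerSeries.C (q : ℤ) :=
    (map_natCast (PowerSeries.C (R := ℤ)) q).symm
  rw [hα, sub_mul, one_mul, map_sub, map_sub, hC, mul_assoc,
    PowerSeries.coeff_C_mul, substXsq, PowerSeries.coeff_mk]
  cases m with
  | zero =>
    rw [PowerSeries.coeff_mk]
    simp [a0, map_ofNat]
  | succ n =>
    rw [PowerSeries.coeff_succ_X_mul, PowerSeries.coeff_mk, PowerSeries.coeff_mk]
    have h2 : (PowerSeries.coeff (n+1)) (2 : PowerSeries ℤ) = 0 := by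
      rw [show (2 : PowerSeries ℤ) = PowerSeries.C (2 : ℤ) by norm_num, PowerSeries.coeff_C]
      simp
    rw [h2]
    rcases Nat.even_or_odd n with ⟨k, hk⟩ | ⟨k, hk⟩
    · have hn1 : countUnbordered q (n+1) = countUnbordered q n * q := by
        rw [show n+1 = 2*k+1 by omega, show n = 2*k by omega]
        exact UB.count_odd q k
      rw [if_neg (by omega : ¬ 2 ∣ n + 1), hn1]
      push_cast
      ring
    · have hrec : countUnbordered q (n+1) + countUnbordered q (k+1)
          = countUnbordered q n * q := by
        rw [show n+1 = 2*k+2 by omega, show n = 2*k+1 by omega]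
        exact UB.count_even q k
      rw [if_pos (by omega : 2 ∣ n + 1), show (n+1)/2 = k+1 by omega, PowerSeries.coeff_mk]
      have := hrec
      zify at this
      linarith
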